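/- Let (ℬ, 𝒜, e, l, i) be a cleft extension of abelian categories. Then there exists a functor q : 𝒜 ⥤ ℬ such that (q, i) is an adjoint pair (q is left adjoint to i), and moreover q ∘ l is naturally isomorphic to Id_ℬ. -/

import Mathlib

/-!
A cleft extension `(ℬ, 𝒜, e, l, i)` of abelian categories consists of abelian categories
`𝒜` and `ℬ` together with functors `i : ℬ ⥤ 𝒜`, `e : 𝒜 ⥤ ℬ` and `l : ℬ ⥤ 𝒜` such that:
(a) `e` is faithful and exact; (b) `(l, e)` is an adjoint pair;
(c) there is a natural isomorphism `e ∘ i ≅ Id_ℬ`.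

STATEMENT: there exists a functor `q : 𝒜 ⥤ ℬ` such that `(q, i)` is an adjoint pair
(`q` is left adjoint to `i`), and moreover `q ∘ l` is naturally isomorphic to `Id_ℬ`.
-/

open CategoryTheory CategoryTheory.Limits

universe v v' u u'

/-- A cleft extension of abelian categories. -/
structure CleftExtension (B : Type u) (A : Type u') [Category.{v} B] [Category.{v'} A]
    [Abelian B] [Abelian A] where
  /-- the inclusion functor -/
  i : B ⥤ A
  /-- the quotient functor -/
  e : A ⥤ B
  /-- the left adjoint of `e` -/
  l : B ⥤ A
  e_faithful : e.Faithful
  e_preservesFiniteLimits : PreservesFiniteLimits e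
  e_preservesFiniteColimits : PreservesFiniteColimits e
  /-- `(l, e)` is an adjoint pair -/
  adj : l ⊣ e
  /-- `e ∘ i` is naturally isomorphic to the identity functor of `B` -/
  iso : i ⋙ e ≅ 𝟭 B

noncomputable section CleftAux

namespace CleftAux

set_option linter.unusedSectionVars false

variable {B : Type u} {A : Type u'} [Category.{v} B] [Category.{v'} A]
  [Abelian B] [Abelian A]
  (i : B ⥤ A) (e : A ⥤ B) (l : B ⥤ A)
  (adj : l ⊣ e) (iso : i ⋙ e ≅ 𝟭 B)

/-- The canonical natural map `l ⟶ i`. -/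
def θ (Z : B) : l.obj Z ⟶ i.obj Z :=
  l.map (iso.inv.app Z) ≫ adj.counit.app (i.obj Z)

lemma θ_natural {Z Z' : B} (f : Z ⟶ Z') :
    l.map f ≫ θ i e l adj iso Z' = θ i e l adj iso Z ≫ i.map f := by
  dsimp only [θ]
  rw [← Category.assoc, ← l.map_comp]
  have h1 : f ≫ iso.inv.app Z' = iso.inv.app Z ≫ e.map (i.map f) := by
    simpa using (iso.inv.naturality f)
  rw [h1, l.map_comp, Category.assoc, adj.counit_naturality, Category.assoc]

/-- The canonical natural map `l ⋙ e ⟶ 𝟭 B`. -/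
def γ (Z : B) : e.obj (l.obj Z) ⟶ Z :=
  e.map (θ i e l adj iso Z) ≫ iso.hom.app Z

lemma γ_natural {Z Z' : B} (f : Z ⟶ Z') :
    e.map (l.map f) ≫ γ i e l adj iso Z' = γ i e l adj iso Z ≫ f := by
  dsimp only [γ]
  rw [← Category.assoc, ← e.map_comp, θ_natural, e.map_comp, Category.assoc]
  have h := iso.hom.naturality f
  simp only [Functor.comp_map, Functor.id_map] at h
  rw [h, Category.assoc]

/-- Key compatibility: `e l (iso.hom) ≫ γ = e(ε_{iY}) ≫ iso.hom`. -/
lemma key (Y : B) :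
    e.map (l.map (iso.hom.app Y)) ≫ γ i e l adj iso Y
      = e.map (adj.counit.app (i.obj Y)) ≫ iso.hom.app Y := by
  dsimp only [γ, θ]
  rw [← Category.assoc, ← e.map_comp, ← Category.assoc, ← l.map_comp, iso.hom_inv_id_app,
    l.map_id, Category.id_comp]

/-- The map whose cokernel defines `q` on objects. -/
def δ (X : A) : e.obj (l.obj (e.obj X)) ⟶ e.obj X :=
  γ i e l adj iso (e.obj X) -
    (e.map (adj.counit.app X) : e.obj (l.obj (e.obj X)) ⟶ e.obj X)

lemma cond_iff [e.Additive] (X : A) {Y : B} (g : e.obj X ⟶ Y) :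
    δ i e l adj iso X ≫ g = 0 ↔
      γ i e l adj iso (e.obj X) ≫ g = e.map (adj.counit.app X) ≫ g := by
  rw [δ]
  rw [Preadditive.sub_comp, sub_eq_zero]

lemma cond_of [e.Additive] (X : A) (Y : B) (f : X ⟶ i.obj Y) :
    δ i e l adj iso X ≫ (e.map f ≫ iso.hom.app Y) = 0 := by
  rw [cond_iff]
  calc γ i e l adj iso (e.obj X) ≫ e.map f ≫ iso.hom.app Y
      = (γ i e l adj iso (e.obj X) ≫ e.map f) ≫ iso.hom.app Y := by rw [Category.assoc]
    _ = (e.map (l.map (e.map f)) ≫ γ i e l adj iso (e.obj (i.obj Y))) ≫ iso.hom.app Y := by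
        rw [γ_natural]
    _ = e.map (l.map (e.map f)) ≫ e.map (l.map (iso.hom.app Y)) ≫ γ i e l adj iso Y := by
        rw [Category.assoc, ← γ_natural i e l adj iso (Z := e.obj (i.obj Y)) (Z' := Y)
          (iso.hom.app Y)]
    _ = e.map (l.map (e.map f)) ≫ e.map (adj.counit.app (i.obj Y)) ≫ iso.hom.app Y := by
        rw [key]
    _ = e.map (adj.counit.app X) ≫ e.map f ≫ iso.hom.app Y := by
        rw [← Category.assoc, ← e.map_comp, adj.counit_naturality f, e.map_comp, Category.assoc]

/-- The map presenting `X` as a cokernel. -/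
def d (X : A) : l.obj (e.obj (l.obj (e.obj X))) ⟶ l.obj (e.obj X) :=
  (show l.obj (e.obj (l.obj (e.obj X))) ⟶ l.obj (e.obj X) from
      adj.counit.app (l.obj (e.obj X))) -
    (show l.obj (e.obj (l.obj (e.obj X))) ⟶ l.obj (e.obj X) from
      l.map (e.map (adj.counit.app X)))

lemma d_comp_eq_zero_iff {X : A} {W : A} (m : l.obj (e.obj X) ⟶ W) :
    d e l adj X ≫ m = 0 ↔
      adj.counit.app (l.obj (e.obj X)) ≫ m = l.map (e.map (adj.counit.app X)) ≫ m := by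
  rw [d, Preadditive.sub_comp, sub_eq_zero]

lemma e_map_d_comp_eq_zero_iff [e.Additive] {X : A} {W : B}
    (m : e.obj (l.obj (e.obj X)) ⟶ W) :
    e.map (d e l adj X) ≫ m = 0 ↔
      e.map (adj.counit.app (l.obj (e.obj X))) ≫ m
        = e.map (l.map (e.map (adj.counit.app X))) ≫ m := by
  rw [d, Functor.map_sub, Preadditive.sub_comp, sub_eq_zero]

lemma d_counit (X : A) : d e l adj X ≫ adj.counit.app X = 0 :=
  (d_comp_eq_zero_iff e l adj _).2 (adj.counit_naturality (adj.counit.app X)).symm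

/-- Comparison map out of the cokernel of `e.map (d X)`. -/
def u [e.Additive] (X : A) : cokernel (e.map (d e l adj X)) ⟶ e.obj X :=
  cokernel.desc _ (e.map (adj.counit.app X))
    (by rw [← e.map_comp, d_counit, e.map_zero])

lemma π_u [e.Additive] (X : A) :
    cokernel.π (e.map (d e l adj X)) ≫ u e l adj X = e.map (adj.counit.app X) :=
  cokernel.π_desc _ _ _

lemma isIso_u [e.Additive] (X : A) : IsIso (u e l adj X) := by
  refine ⟨adj.unit.app (e.obj X) ≫ cokernel.π (e.map (d e l adj X)), ?_, ?_⟩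
  · have h2 : e.map (l.map (e.map (adj.counit.app X))) ≫ cokernel.π (e.map (d e l adj X))
        = e.map (adj.counit.app (l.obj (e.obj X))) ≫ cokernel.π (e.map (d e l adj X)) :=
      ((e_map_d_comp_eq_zero_iff e l adj _).1 (cokernel.condition _)).symm
    rw [← cancel_epi (cokernel.π (e.map (d e l adj X))), Category.comp_id, ← Category.assoc,
      π_u, ← Category.assoc, ← adj.unit_naturality, Category.assoc, h2, ← Category.assoc,
      adj.right_triangle_components, Category.id_comp]
  · rw [Category.assoc, π_u, adj.right_triangle_components]
variable [e.Faithful] [PreservesFiniteLimits e] [PreservesFiniteColimits e]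

/-- The counit realizes `X` as the cokernel of `d X`. -/
def c (X : A) : cokernel (d e l adj X) ⟶ X :=
  cokernel.desc _ (adj.counit.app X) (d_counit e l adj X)

lemma π_c (X : A) : cokernel.π (d e l adj X) ≫ c e l adj X = adj.counit.app X :=
  cokernel.π_desc _ _ _

lemma comparison_comp_e_map_c [e.Additive] (X : A) :
    cokernelComparison (d e l adj X) e ≫ e.map (c e l adj X) = u e l adj X := by
  rw [← cancel_epi (cokernel.π (e.map (d e l adj X))), ← Category.assoc,
    π_comp_cokernelComparison, ← e.map_comp, π_c, π_u]

lemma isIso_e_map_c [e.Additive] (X : A) : IsIso (e.map (c e l adj X)) := by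
  haveI : PreservesColimit (parallelPair (d e l adj X) 0) e := inferInstance
  haveI := isIso_u e l adj X
  have h := comparison_comp_e_map_c e l adj X
  have h2 : e.map (c e l adj X) = inv (cokernelComparison (d e l adj X) e) ≫ u e l adj X := by
    rw [← h, IsIso.inv_hom_id_assoc]
  rw [h2]
  infer_instance

lemma isIso_of_isIso_e_map {X Y : A} (f : X ⟶ Y) (h : IsIso (e.map f)) : IsIso f := by
  haveI : e.Additive := Functor.additive_of_preserves_binary_products e
  haveI := h
  have hker : kernel.ι f = 0 := by
    apply e.map_injective
    rw [e.map_zero, ← cancel_mono (e.map f), zero_comp, ← e.map_comp, kernel.condition,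
      e.map_zero]
  have hcoker : cokernel.π f = 0 := by
    apply e.map_injective
    rw [e.map_zero, ← cancel_epi (e.map f), comp_zero, ← e.map_comp, cokernel.condition,
      e.map_zero]
  haveI : Mono f := Abelian.mono_of_kernel_ι_eq_zero f hker
  haveI : Epi f := Abelian.epi_of_cokernel_π_eq_zero f hcoker
  exact isIso_of_mono_of_epi f

lemma isIso_c [e.Additive] (X : A) : IsIso (c e l adj X) :=
  isIso_of_isIso_e_map e (c e l adj X) (isIso_e_map_c e l adj X)

lemma exists_of_cond [e.Additive] (X : A) (Y : B) (g : e.obj X ⟶ Y)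
    (hg : γ i e l adj iso (e.obj X) ≫ g = e.map (adj.counit.app X) ≫ g) :
    ∃ f : X ⟶ i.obj Y, e.map f = g ≫ iso.inv.app Y := by
  set gh : l.obj (e.obj X) ⟶ i.obj Y :=
    l.map (g ≫ iso.inv.app Y) ≫ adj.counit.app (i.obj Y) with hgh
  have hgh' : adj.unit.app (e.obj X) ≫ e.map gh = g ≫ iso.inv.app Y := by
    have h2 : (adj.homEquiv (e.obj X) (i.obj Y)) gh = g ≫ iso.inv.app Y := by
      rw [hgh, ← Adjunction.homEquiv_counit, Equiv.apply_symm_apply]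
    rwa [Adjunction.homEquiv_unit] at h2
  have hegh : e.map gh = γ i e l adj iso (e.obj X) ≫ g ≫ iso.inv.app Y := by
    have hε : e.map (l.map (iso.hom.app Y)) ≫ γ i e l adj iso Y ≫ iso.inv.app Y
        = e.map (adj.counit.app (i.obj Y)) := by
      rw [← Category.assoc, key, Category.assoc, iso.hom_inv_id_app]
      simp
    have hginv : (g ≫ iso.inv.app Y) ≫ iso.hom.app Y = g := by simp
    rw [hgh, e.map_comp, ← hε, ← Category.assoc, ← e.map_comp, ← l.map_comp, hginv,
      ← Category.assoc, γ_natural i e l adj iso g, Category.assoc]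
  have hd : d e l adj X ≫ gh = 0 := by
    rw [d_comp_eq_zero_iff]
    apply (adj.homEquiv (e.obj (l.obj (e.obj X))) (i.obj Y)).injective
    rw [Adjunction.homEquiv_unit, Adjunction.homEquiv_unit]
    have hL : adj.unit.app (e.obj (l.obj (e.obj X)))
        ≫ e.map (adj.counit.app (l.obj (e.obj X)) ≫ gh) = e.map gh := by
      rw [e.map_comp, ← Category.assoc, adj.right_triangle_components]
      simp
    have hR : adj.unit.app (e.obj (l.obj (e.obj X)))
        ≫ e.map (l.map (e.map (adj.counit.app X)) ≫ gh)
        = e.map (adj.counit.app X) ≫ g ≫ iso.inv.app Y := by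
      rw [e.map_comp, ← Category.assoc]
      erw [adj.unit_naturality (e.map (adj.counit.app X))]
      rw [Category.assoc]
      simp only [Functor.id_obj]
      rw [hgh']
    rw [hL, hR, hegh, ← Category.assoc, hg, Category.assoc]
  haveI := isIso_c e l adj X
  refine ⟨inv (c e l adj X) ≫ cokernel.desc (d e l adj X) gh hd, ?_⟩
  have hεf : adj.counit.app X ≫ (inv (c e l adj X) ≫ cokernel.desc (d e l adj X) gh hd)
      = gh := by
    rw [← π_c e l adj X, Category.assoc, IsIso.hom_inv_id_assoc, cokernel.π_desc]
  have : e.map (inv (c e l adj X) ≫ cokernel.desc (d e l adj X) gh hd)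
      = adj.unit.app (e.obj X) ≫ e.map (adj.counit.app X)
        ≫ e.map (inv (c e l adj X) ≫ cokernel.desc (d e l adj X) gh hd) := by
    rw [← Category.assoc, adj.right_triangle_components]
    simp
  rw [this, ← e.map_comp, hεf, hgh']

lemma cond_π [e.Additive] (X : A) {Y : B} (h : cokernel (δ i e l adj iso X) ⟶ Y) :
    γ i e l adj iso (e.obj X) ≫ (cokernel.π (δ i e l adj iso X) ≫ h)
      = e.map (adj.counit.app X) ≫ (cokernel.π (δ i e l adj iso X) ≫ h) :=
  (cond_iff i e l adj iso X _).1
    (by rw [← Category.assoc, cokernel.condition, zero_comp])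

/-- The adjoint transpose of a map out of the cokernel of `δ X`. -/
def qmap [e.Additive] (X : A) {Y : B} (h : cokernel (δ i e l adj iso X) ⟶ Y) :
    X ⟶ i.obj Y :=
  (exists_of_cond i e l adj iso X Y _ (cond_π i e l adj iso X h)).choose

lemma qmap_spec [e.Additive] (X : A) {Y : B} (h : cokernel (δ i e l adj iso X) ⟶ Y) :
    e.map (qmap i e l adj iso X h)
      = (cokernel.π (δ i e l adj iso X) ≫ h) ≫ iso.inv.app Y :=
  (exists_of_cond i e l adj iso X Y _ (cond_π i e l adj iso X h)).choose_spec

/-- The hom-set equivalence exhibiting the left adjoint of `i`. -/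
def homEquivQ [e.Additive] (X : A) (Y : B) :
    (cokernel (δ i e l adj iso X) ⟶ Y) ≃ (X ⟶ i.obj Y) where
  toFun h := qmap i e l adj iso X h
  invFun f := cokernel.desc _ (e.map f ≫ iso.hom.app Y) (cond_of i e l adj iso X Y f)
  left_inv h := by
    rw [← cancel_epi (cokernel.π (δ i e l adj iso X)), cokernel.π_desc, qmap_spec,
      Category.assoc, Category.assoc, iso.inv_hom_id_app]
    simp
  right_inv f := by
    apply e.map_injective
    rw [qmap_spec, cokernel.π_desc, Category.assoc, iso.hom_inv_id_app]
    simp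

lemma homEquivQ_natural [e.Additive] (X : A) {Y Y' : B} (g : Y ⟶ Y')
    (h : cokernel (δ i e l adj iso X) ⟶ Y) :
    homEquivQ i e l adj iso X Y' (h ≫ g) = homEquivQ i e l adj iso X Y h ≫ i.map g := by
  apply e.map_injective
  have hnat : iso.inv.app Y ≫ e.map (i.map g) = g ≫ iso.inv.app Y' := by
    have := iso.inv.naturality g
    simp only [Functor.comp_map, Functor.id_map] at this
    exact this.symm
  rw [e.map_comp]
  show e.map (qmap i e l adj iso X (h ≫ g)) = e.map (qmap i e l adj iso X h) ≫ _
  rw [qmap_spec, qmap_spec]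
  simp only [Category.assoc]
  rw [hnat]

/-- The left adjoint of `i`. -/
def Q [e.Additive] : A ⥤ B :=
  Adjunction.leftAdjointOfEquiv (G := i) (fun X Y => homEquivQ i e l adj iso X Y)
    (fun X Y Y' g h => homEquivQ_natural i e l adj iso X g h)

/-- The adjunction `Q ⊣ i`. -/
def Qadj [e.Additive] : Q i e l adj iso ⊣ i :=
  Adjunction.adjunctionOfEquivLeft _ _

end CleftAux

end CleftAux

/-- In a cleft extension `(ℬ, 𝒜, e, l, i)` of abelian categories, there exists a functor
`q : 𝒜 ⥤ ℬ` which is left adjoint to `i`, and such that `q ∘ l ≅ Id_ℬ`. -/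
theorem cleftExtension_exists_left_adjoint_of_i {B : Type u} {A : Type u'}
    [Category.{v} B] [Category.{v'} A] [Abelian B] [Abelian A]
    (ce : CleftExtension B A) :
    ∃ q : A ⥤ B, Nonempty (q ⊣ ce.i) ∧ Nonempty (ce.l ⋙ q ≅ 𝟭 B) := by
  haveI := ce.e_faithful
  haveI := ce.e_preservesFiniteLimits
  haveI := ce.e_preservesFiniteColimits
  haveI : ce.e.Additive := Functor.additive_of_preserves_binary_products ce.e
  refine ⟨CleftAux.Q ce.i ce.e ce.l ce.adj ce.iso,
    ⟨CleftAux.Qadj ce.i ce.e ce.l ce.adj ce.iso⟩,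
    ⟨Adjunction.leftAdjointUniq
      ((ce.adj.comp (CleftAux.Qadj ce.i ce.e ce.l ce.adj ce.iso)).ofNatIsoRight ce.iso)
      Adjunction.id⟩⟩
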